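/- Fix λ > 0, an integer k ≥ 1, α ∈ (−1/k, −1/(k+1)), and times 0 ≤ t₁ ≤ t₂, and set p = p(n) = n^α (real power). Then, under the two-time dynamic Erdős–Rényi measure μ_{n,p}^{(t₁,t₂)}, lim_{n→∞} Cov[ f_{n,k}(ω₁), f_{n,k}(ω₂) ] / Var_{μ_{n,p}}[f_{n,k}] = e^{−λ(t₂−t₁)}. -/

import Mathlib

open Finset MeasureTheory Filter Real

noncomputable section

open scoped Classical

/-- The edge set `E_n`: unordered pairs of distinct elements of `[n]`. -/
abbrev Edge (n : ℕ) := {e : Sym2 (Fin n) // ¬ e.IsDiag}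

/-- An edge configuration on `[n]`. -/
abbrev Config (n : ℕ) := Edge n → Bool

/-- Bernoulli(p) weight of a state. -/
def bern (p : ℝ) (b : Bool) : ℝ := if b then p else 1 - p

/-- Weight of a configuration under the static Erdős–Rényi measure `μ_{n,p}`. -/
def staticWeight (n : ℕ) (p : ℝ) (ω : Config n) : ℝ := ∏ e : Edge n, bern p (ω e)

/-- Expectation under the static Erdős–Rényi measure `μ_{n,p}`. -/
def staticExp (n : ℕ) (p : ℝ) (f : Config n → ℝ) : ℝ :=
  ∑ ω : Config n, staticWeight n p ω * f ω

/-- Variance under the static Erdős–Rényi measure `μ_{n,p}`. -/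
def staticVar (n : ℕ) (p : ℝ) (f : Config n → ℝ) : ℝ :=
  staticExp n p (fun ω => (f ω - staticExp n p f) ^ 2)

/-- `A` is a clique of the graph `G(ω)`: every pair of distinct elements of `A`
is an edge of `G(ω)`. -/
def IsCliqueOf {n : ℕ} (A : Finset (Fin n)) (ω : Config n) : Prop :=
  ∀ e : Edge n, e.1 ∈ A.sym2 → ω e = true

/-- The clique count `f_{n,j}(ω)`: the number of `(j+1)`-element subsets of `[n]`
all of whose pairs are edges of `G(ω)`. -/
def cliqueCount (n j : ℕ) (ω : Config n) : ℕ :=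
  ((Finset.powersetCard (j + 1) (Finset.univ : Finset (Fin n))).filter
    (fun A => IsCliqueOf A ω)).card

/-- Real-valued clique count. -/
def cliqueCountR (n j : ℕ) (ω : Config n) : ℝ := (cliqueCount n j ω : ℝ)

/-- The Euler characteristic `χ_n(ω) = Σ_{j=0}^{n-1} (-1)^j f_{n,j}(ω)`. -/
def eulerChar (n : ℕ) (ω : Config n) : ℝ :=
  ∑ j ∈ Finset.range n, (-1 : ℝ) ^ j * cliqueCountR n j ω

/-- Transition probability of the stationary on/off Markov chain with invariant
law Bernoulli(p) over a time increment `s`. -/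
def transP (lam p s : ℝ) (b b' : Bool) : ℝ :=
  if b then (if b' then p + (1 - p) * Real.exp (-lam * s)
             else (1 - p) * (1 - Real.exp (-lam * s)))
  else (if b' then p * (1 - Real.exp (-lam * s))
        else (1 - p) + p * Real.exp (-lam * s))

/-- Weight of a trajectory of the stationary on/off Markov chain observed at the
times `t 0 ≤ t 1 ≤ …`. -/
def pathWeight (lam p : ℝ) {m : ℕ} (t : Fin m → ℝ) (b : Fin m → Bool) : ℝ :=
  ∏ i : Fin m,
    if (i : ℕ) = 0 then bern p (b i)
    else transP lam p (t i - t ⟨(i : ℕ) - 1, lt_of_le_of_lt (Nat.sub_le _ _) i.isLt⟩)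
      (b ⟨(i : ℕ) - 1, lt_of_le_of_lt (Nat.sub_le _ _) i.isLt⟩) (b i)

/-- Weight of an `m`-tuple of edge configurations under the `m`-time dynamic
Erdős–Rényi measure `μ_{n,p}^{(t 0, …, t (m-1))}`. -/
def dynWeight (lam p : ℝ) (n : ℕ) {m : ℕ} (t : Fin m → ℝ) (ω : Fin m → Config n) : ℝ :=
  ∏ e : Edge n, pathWeight lam p t (fun i => ω i e)

/-- Expectation under the `m`-time dynamic Erdős–Rényi measure. -/
def dynExp (lam p : ℝ) (n : ℕ) {m : ℕ} (t : Fin m → ℝ) (F : (Fin m → Config n) → ℝ) : ℝ :=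
  ∑ ω : Fin m → Config n, dynWeight lam p n t ω * F ω

/-- The normalized clique count `f̄_{n,k}` (under the measure `μ_{n,p}`). -/
def fbar (n k : ℕ) (p : ℝ) (ω : Config n) : ℝ :=
  (cliqueCountR n k ω - staticExp n p (cliqueCountR n k)) /
    Real.sqrt (staticVar n p (cliqueCountR n k))

/-- The normalized Euler characteristic `χ̄_n` (under the measure `μ_{n,p}`). -/
def chibar (n : ℕ) (p : ℝ) (ω : Config n) : ℝ :=
  (eulerChar n ω - staticExp n p (eulerChar n)) /
    Real.sqrt (staticVar n p (eulerChar n))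

/-- The clique indicator `1_A(ω)` as a real number. -/
def cliqueInd {n : ℕ} (A : Finset (Fin n)) (ω : Config n) : ℝ :=
  if IsCliqueOf A ω then 1 else 0

/-- A quadruple of subsets has an independent set if one of them shares at most
one vertex with each of the others. -/
def HasIndepSet {n : ℕ} (A : Fin 4 → Finset (Fin n)) : Prop :=
  ∃ q : Fin 4, ∀ r : Fin 4, r ≠ q → ((A q) ∩ (A r)).card ≤ 1

/-- The quantity `g(h; Ā)` built from clique indicators at three times. -/
def gQuad {n : ℕ} (A : Fin 4 → Finset (Fin n)) (ω : Fin 3 → Config n) : ℝ :=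
  (cliqueInd (A 0) (ω 2) - cliqueInd (A 0) (ω 1)) *
  (cliqueInd (A 1) (ω 2) - cliqueInd (A 1) (ω 1)) *
  (cliqueInd (A 2) (ω 1) - cliqueInd (A 2) (ω 0)) *
  (cliqueInd (A 3) (ω 1) - cliqueInd (A 3) (ω 0))

/-- `ver(Ā)`: inclusion–exclusion count of vertices. -/
def verA {n : ℕ} (A : Fin 4 → Finset (Fin n)) : ℤ :=
  (∑ q : Fin 4, ((A q).card : ℤ))
  - (∑ q : Fin 4, ∑ r : Fin 4, if q < r then (((A q) ∩ (A r)).card : ℤ) else 0)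
  + (∑ q : Fin 4, ∑ r : Fin 4, ∑ s : Fin 4,
      if q < r ∧ r < s then (((A q) ∩ (A r) ∩ (A s)).card : ℤ) else 0)
  - ((A 0 ∩ A 1 ∩ A 2 ∩ A 3).card : ℤ)

/-- `pair(Ā)`: inclusion–exclusion count of potential edges. -/
def pairA {n : ℕ} (A : Fin 4 → Finset (Fin n)) : ℤ :=
  (∑ q : Fin 4, (Nat.choose (A q).card 2 : ℤ))
  - (∑ q : Fin 4, ∑ r : Fin 4, if q < r then (Nat.choose ((A q) ∩ (A r)).card 2 : ℤ) else 0)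
  + (∑ q : Fin 4, ∑ r : Fin 4, ∑ s : Fin 4,
      if q < r ∧ r < s then (Nat.choose ((A q) ∩ (A r) ∩ (A s)).card 2 : ℤ) else 0)
  - (Nat.choose (A 0 ∩ A 1 ∩ A 2 ∩ A 3).card 2 : ℤ)

namespace DynER

variable {n : ℕ}

/-- The edge set of a vertex set. -/
def ES {n : ℕ} (A : Finset (Fin n)) : Finset (Edge n) :=
  Finset.univ.filter (fun e : Edge n => e.1 ∈ A.sym2)

lemma mem_ES {A : Finset (Fin n)} {e : Edge n} : e ∈ ES A ↔ e.1 ∈ A.sym2 := by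
  simp [ES]

lemma ES_inter (A B : Finset (Fin n)) : ES A ∩ ES B = ES (A ∩ B) := by
  ext e
  simp only [Finset.mem_inter, mem_ES, Finset.mem_sym2_iff, Finset.mem_inter]
  exact ⟨fun h a ha => ⟨h.1 a ha, h.2 a ha⟩, fun h => ⟨fun a ha => (h a ha).1,
    fun a ha => (h a ha).2⟩⟩

lemma card_ES (A : Finset (Fin n)) : (ES A).card = A.card.choose 2 := by
  classical
  have hbij : (ES A).card = ((A.sym2).filter (fun z => ¬ z.IsDiag)).card := by
    apply Finset.card_bij (fun e _ => e.1)
    · intro e he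
      simp only [Finset.mem_filter]
      exact ⟨mem_ES.mp he, e.2⟩
    · intro e₁ h₁ e₂ h₂ h
      exact Subtype.ext h
    · intro z hz
      simp only [Finset.mem_filter] at hz
      exact ⟨⟨z, hz.2⟩, mem_ES.mpr hz.1, rfl⟩
  rw [hbij]
  have hsplit : ((A.sym2).filter (fun z => z.IsDiag)).card +
      ((A.sym2).filter (fun z => ¬ z.IsDiag)).card = (A.sym2).card := by
    rw [Finset.card_filter_add_card_filter_not]
  have hdiag : ((A.sym2).filter (fun z => z.IsDiag)).card = A.card := by
    have himg : (A.sym2).filter (fun z => z.IsDiag) = A.image Sym2.diag := by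
      ext z
      simp only [Finset.mem_filter, Finset.mem_image]
      constructor
      · rintro ⟨hz, hd⟩
        induction z using Sym2.ind with
        | _ x y =>
          rw [Sym2.mk_isDiag_iff] at hd
          subst hd
          exact ⟨x, Finset.mem_sym2_iff.mp hz x (Sym2.mem_mk_left x x), rfl⟩
      · rintro ⟨a, ha, rfl⟩
        refine ⟨Finset.mem_sym2_iff.mpr ?_, Sym2.diag_isDiag a⟩
        intro b hb
        rw [Sym2.diag, Sym2.mem_iff] at hb
        rcases hb with rfl | rfl <;> exact ha
    rw [himg, Finset.card_image_of_injective _ Sym2.diag_injective]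
  have hs2 : (A.sym2).card = (A.card + 1).choose 2 := Finset.card_sym2 A
  have hcs : (A.card + 1).choose 2 = A.card.choose 1 + A.card.choose 2 :=
    Nat.choose_succ_succ A.card 1
  have h1 : A.card.choose 1 = A.card := Nat.choose_one_right _
  omega

end DynER
namespace DynER2

variable {n : ℕ}

lemma sum_prod_config (h : Edge n → Bool → ℝ) :
    ∑ ω : Config n, ∏ e : Edge n, h e (ω e) = ∏ e : Edge n, (h e true + h e false) := by
  classical
  have hrhs : (∏ e : Edge n, (h e true + h e false)) = ∏ e : Edge n, ∑ b : Bool, h e b :=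
    Finset.prod_congr rfl (fun e _ => (Fintype.sum_bool (h e)).symm)
  rw [hrhs]
  have h2 := Finset.prod_univ_sum (fun _ : Edge n => (Finset.univ : Finset Bool)) h
  rw [Fintype.piFinset_univ] at h2
  exact h2.symm

lemma sum_prod_pair (H : Edge n → (Fin 2 → Bool) → ℝ) :
    ∑ ω : Fin 2 → Config n, ∏ e : Edge n, H e (fun i => ω i e)
      = ∏ e : Edge n, ∑ b : Fin 2 → Bool, H e b := by
  classical
  have hswap : Function.Bijective
      (Function.swap : (Fin 2 → Config n) → (Edge n → Fin 2 → Bool)) := by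
    constructor
    · intro a b h
      funext i e
      exact congrFun (congrFun h e) i
    · intro σ
      exact ⟨Function.swap σ, rfl⟩
  have h1 : ∑ ω : Fin 2 → Config n, ∏ e : Edge n, H e (fun i => ω i e)
      = ∑ σ : Edge n → (Fin 2 → Bool), ∏ e : Edge n, H e (σ e) :=
    Fintype.sum_bijective Function.swap hswap _ _ (fun ω => rfl)
  rw [h1]
  have h2 := Finset.prod_univ_sum (fun _ : Edge n => (Finset.univ : Finset (Fin 2 → Bool))) H
  rw [Fintype.piFinset_univ] at h2
  exact h2.symm

lemma sum_fin2bool (F : (Fin 2 → Bool) → ℝ) :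
    ∑ b : Fin 2 → Bool, F b =
      F ![true, true] + F ![true, false] + F ![false, true] + F ![false, false] := by
  rw [← Equiv.sum_comp (finTwoArrowEquiv Bool).symm F]
  rw [Fintype.sum_prod_type]
  rw [Fintype.sum_bool]
  rw [Fintype.sum_bool, Fintype.sum_bool]
  simp only [finTwoArrowEquiv_symm_apply]
  ring

lemma pathWeight_two (lam p t₁ t₂ : ℝ) (b : Fin 2 → Bool) :
    pathWeight lam p ![t₁, t₂] b = bern p (b 0) * transP lam p (t₂ - t₁) (b 0) (b 1) := by
  rw [pathWeight, Fin.prod_univ_two]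
  norm_num

end DynER2
namespace DynER3
open DynER DynER2

variable {n : ℕ}

def ind (x : Bool) : ℝ := if x then 1 else 0

variable (lam p t₁ t₂ : ℝ)

lemma wsum_one : ∑ b : Fin 2 → Bool, pathWeight lam p ![t₁, t₂] b = 1 := by
  rw [sum_fin2bool]
  simp [pathWeight_two, bern, transP, ind]
  ring

lemma wsum_fst : ∑ b : Fin 2 → Bool, pathWeight lam p ![t₁, t₂] b * ind (b 0) = p := by
  rw [sum_fin2bool]
  simp [pathWeight_two, bern, transP, ind]
  ring

lemma wsum_snd : ∑ b : Fin 2 → Bool, pathWeight lam p ![t₁, t₂] b * ind (b 1) = p := by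
  rw [sum_fin2bool]
  simp [pathWeight_two, bern, transP, ind]
  ring

lemma wsum_both : ∑ b : Fin 2 → Bool, pathWeight lam p ![t₁, t₂] b * (ind (b 0) * ind (b 1))
    = p * (p + (1 - p) * Real.exp (-lam * (t₂ - t₁))) := by
  rw [sum_fin2bool]
  simp [pathWeight_two, bern, transP, ind]

lemma cliqueInd_eq_prod (A : Finset (Fin n)) (ω : Config n) :
    cliqueInd A ω = ∏ e : Edge n, (if e ∈ ES A then ind (ω e) else 1) := by
  classical
  by_cases h : IsCliqueOf A ω
  · rw [cliqueInd, if_pos h]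
    symm
    apply Finset.prod_eq_one
    intro e _
    by_cases he : e ∈ ES A
    · rw [if_pos he]
      simp [ind, h e (mem_ES.mp he)]
    · rw [if_neg he]
  · rw [cliqueInd, if_neg h]
    rw [IsCliqueOf] at h
    push_neg at h
    obtain ⟨e, he, hne⟩ := h
    symm
    apply Finset.prod_eq_zero (Finset.mem_univ e)
    rw [if_pos (mem_ES.mpr he)]
    simp [ind, hne]

end DynER3
namespace DynER4
open DynER DynER2 DynER3

variable {n : ℕ} (lam p t₁ t₂ : ℝ)

lemma prod_ite_const (s : Finset (Edge n)) (c : ℝ) :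
    ∏ e : Edge n, (if e ∈ s then c else 1) = c ^ s.card := by
  rw [Finset.prod_ite_mem, Finset.univ_inter, Finset.prod_const]

lemma dynExp_pair (hp : p ≠ 0) (A B : Finset (Fin n)) :
    dynExp lam p n ![t₁, t₂] (fun ω => cliqueInd A (ω 0) * cliqueInd B (ω 1))
      = p ^ (ES A).card * p ^ (ES B).card *
        ((p + (1 - p) * Real.exp (-lam * (t₂ - t₁))) / p) ^ (ES A ∩ ES B).card := by
  classical
  set x := p + (1 - p) * Real.exp (-lam * (t₂ - t₁)) with hx
  set H : Edge n → (Fin 2 → Bool) → ℝ := fun e b =>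
    pathWeight lam p ![t₁, t₂] b *
      ((if e ∈ ES A then ind (b 0) else 1) * (if e ∈ ES B then ind (b 1) else 1)) with hH
  have hstep : dynExp lam p n ![t₁, t₂] (fun ω => cliqueInd A (ω 0) * cliqueInd B (ω 1))
      = ∑ ω : Fin 2 → Config n, ∏ e : Edge n, H e (fun i => ω i e) := by
    rw [dynExp]
    apply Finset.sum_congr rfl
    intro ω _
    rw [dynWeight, cliqueInd_eq_prod, cliqueInd_eq_prod, ← Finset.prod_mul_distrib,
      ← Finset.prod_mul_distrib]
  rw [hstep, sum_prod_pair H]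
  have hedge : ∀ e : Edge n, (∑ b : Fin 2 → Bool, H e b) =
      (if e ∈ ES A then p else 1) * (if e ∈ ES B then p else 1) *
        (if e ∈ ES A ∩ ES B then x / p else 1) := by
    intro e
    by_cases hA : e ∈ ES A <;> by_cases hB : e ∈ ES B
    · simp only [hH, if_pos hA, if_pos hB, if_pos (Finset.mem_inter.mpr ⟨hA, hB⟩)]
      rw [wsum_both]
      field_simp
      rw [hx]; ring_nf
    · simp only [hH, if_pos hA, if_neg hB, if_neg (fun h => hB (Finset.mem_inter.mp h).2),
        mul_one, one_mul]
      rw [wsum_fst]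
    · simp only [hH, if_neg hA, if_pos hB, if_neg (fun h => hA (Finset.mem_inter.mp h).1),
        mul_one, one_mul]
      rw [wsum_snd]
    · simp only [hH, if_neg hA, if_neg hB, if_neg (fun h => hA (Finset.mem_inter.mp h).1),
        mul_one, one_mul]
      rw [wsum_one]
  rw [Finset.prod_congr rfl (fun e _ => hedge e), Finset.prod_mul_distrib,
    Finset.prod_mul_distrib, prod_ite_const, prod_ite_const, prod_ite_const]

lemma dynExp_single0 (A : Finset (Fin n)) :
    dynExp lam p n ![t₁, t₂] (fun ω => cliqueInd A (ω 0)) = p ^ (ES A).card := by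
  classical
  set H : Edge n → (Fin 2 → Bool) → ℝ := fun e b =>
    pathWeight lam p ![t₁, t₂] b * (if e ∈ ES A then ind (b 0) else 1) with hH
  have hstep : dynExp lam p n ![t₁, t₂] (fun ω => cliqueInd A (ω 0))
      = ∑ ω : Fin 2 → Config n, ∏ e : Edge n, H e (fun i => ω i e) := by
    rw [dynExp]
    apply Finset.sum_congr rfl
    intro ω _
    rw [dynWeight, cliqueInd_eq_prod, ← Finset.prod_mul_distrib]
  rw [hstep, sum_prod_pair H]
  have hedge : ∀ e : Edge n, (∑ b : Fin 2 → Bool, H e b) = (if e ∈ ES A then p else 1) := by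
    intro e
    by_cases hA : e ∈ ES A
    · simp only [hH, if_pos hA]
      rw [wsum_fst]
    · simp only [hH, if_neg hA, mul_one]
      rw [wsum_one]
  rw [Finset.prod_congr rfl (fun e _ => hedge e), prod_ite_const]

lemma dynExp_single1 (A : Finset (Fin n)) :
    dynExp lam p n ![t₁, t₂] (fun ω => cliqueInd A (ω 1)) = p ^ (ES A).card := by
  classical
  set H : Edge n → (Fin 2 → Bool) → ℝ := fun e b =>
    pathWeight lam p ![t₁, t₂] b * (if e ∈ ES A then ind (b 1) else 1) with hH
  have hstep : dynExp lam p n ![t₁, t₂] (fun ω => cliqueInd A (ω 1))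
      = ∑ ω : Fin 2 → Config n, ∏ e : Edge n, H e (fun i => ω i e) := by
    rw [dynExp]
    apply Finset.sum_congr rfl
    intro ω _
    rw [dynWeight, cliqueInd_eq_prod, ← Finset.prod_mul_distrib]
  rw [hstep, sum_prod_pair H]
  have hedge : ∀ e : Edge n, (∑ b : Fin 2 → Bool, H e b) = (if e ∈ ES A then p else 1) := by
    intro e
    by_cases hA : e ∈ ES A
    · simp only [hH, if_pos hA]
      rw [wsum_snd]
    · simp only [hH, if_neg hA, mul_one]
      rw [wsum_one]
  rw [Finset.prod_congr rfl (fun e _ => hedge e), prod_ite_const]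

lemma staticExp_pair (hp : p ≠ 0) (A B : Finset (Fin n)) :
    staticExp n p (fun ω => cliqueInd A ω * cliqueInd B ω)
      = p ^ (ES A).card * p ^ (ES B).card * (1 / p) ^ (ES A ∩ ES B).card := by
  classical
  set h : Edge n → Bool → ℝ := fun e y =>
    bern p y * ((if e ∈ ES A then ind y else 1) * (if e ∈ ES B then ind y else 1)) with hh
  have hstep : staticExp n p (fun ω => cliqueInd A ω * cliqueInd B ω)
      = ∑ ω : Config n, ∏ e : Edge n, h e (ω e) := by
    rw [staticExp]
    apply Finset.sum_congr rfl
    intro ω _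
    rw [staticWeight, cliqueInd_eq_prod, cliqueInd_eq_prod, ← Finset.prod_mul_distrib,
      ← Finset.prod_mul_distrib]
  rw [hstep, sum_prod_config h]
  have hedge : ∀ e : Edge n, h e true + h e false =
      (if e ∈ ES A then p else 1) * (if e ∈ ES B then p else 1) *
        (if e ∈ ES A ∩ ES B then 1 / p else 1) := by
    intro e
    by_cases hA : e ∈ ES A <;> by_cases hB : e ∈ ES B
    · simp only [hh, if_pos hA, if_pos hB, if_pos (Finset.mem_inter.mpr ⟨hA, hB⟩), bern, ind]
      field_simp
      simp
    · simp only [hh, if_pos hA, if_neg hB, if_neg (fun h => hB (Finset.mem_inter.mp h).2),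
        bern, ind]
      norm_num
    · simp only [hh, if_neg hA, if_pos hB, if_neg (fun h => hA (Finset.mem_inter.mp h).1),
        bern, ind]
      norm_num
    · simp only [hh, if_neg hA, if_neg hB, if_neg (fun h => hA (Finset.mem_inter.mp h).1),
        bern, ind]
      norm_num
  rw [Finset.prod_congr rfl (fun e _ => hedge e), Finset.prod_mul_distrib,
    Finset.prod_mul_distrib, prod_ite_const, prod_ite_const, prod_ite_const]

lemma staticExp_single (A : Finset (Fin n)) :
    staticExp n p (cliqueInd A) = p ^ (ES A).card := by
  classical
  set h : Edge n → Bool → ℝ := fun e y => bern p y * (if e ∈ ES A then ind y else 1) with hh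
  have hstep : staticExp n p (cliqueInd A) = ∑ ω : Config n, ∏ e : Edge n, h e (ω e) := by
    rw [staticExp]
    apply Finset.sum_congr rfl
    intro ω _
    rw [staticWeight, cliqueInd_eq_prod, ← Finset.prod_mul_distrib]
  rw [hstep, sum_prod_config h]
  have hedge : ∀ e : Edge n, h e true + h e false = (if e ∈ ES A then p else 1) := by
    intro e
    by_cases hA : e ∈ ES A <;>
      simp [hh, hA, bern, ind]
  rw [Finset.prod_congr rfl (fun e _ => hedge e), prod_ite_const]

lemma sum_staticWeight : ∑ ω : Config n, staticWeight n p ω = 1 := by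
  classical
  have : ∀ ω : Config n, staticWeight n p ω = ∏ e : Edge n, bern p (ω e) := fun _ => rfl
  rw [Finset.sum_congr rfl (fun ω _ => this ω), sum_prod_config (fun _ y => bern p y)]
  apply Finset.prod_eq_one
  intro e _
  simp [bern]

end DynER4
namespace DynER5
open DynER DynER2 DynER3 DynER4

variable {n k : ℕ} (lam p t₁ t₂ : ℝ)

lemma cliqueCountR_eq_sum (ω : Config n) :
    cliqueCountR n k ω =
      ∑ A ∈ Finset.powersetCard (k + 1) (Finset.univ : Finset (Fin n)), cliqueInd A ω := by
  classical
  rw [cliqueCountR, cliqueCount, Finset.card_filter, Nat.cast_sum]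
  apply Finset.sum_congr rfl
  intro A _
  by_cases h : IsCliqueOf A ω <;> simp [cliqueInd, h]

lemma staticExp_sum {ι : Type*} (s : Finset ι) (G : ι → Config n → ℝ) :
    staticExp n p (fun ω => ∑ x ∈ s, G x ω) = ∑ x ∈ s, staticExp n p (G x) := by
  rw [staticExp]
  simp_rw [Finset.mul_sum]
  rw [Finset.sum_comm]
  rfl

lemma dynExp_sum {ι : Type*} (s : Finset ι) (G : ι → (Fin 2 → Config n) → ℝ) :
    dynExp lam p n ![t₁, t₂] (fun ω => ∑ x ∈ s, G x ω)
      = ∑ x ∈ s, dynExp lam p n ![t₁, t₂] (G x) := by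
  rw [dynExp]
  simp_rw [Finset.mul_sum]
  rw [Finset.sum_comm]
  rfl

lemma staticVar_eq (f : Config n → ℝ) :
    staticVar n p f = staticExp n p (fun ω => f ω * f ω) - staticExp n p f * staticExp n p f := by
  rw [staticVar]
  set c := staticExp n p f with hc
  have hexp : ∀ ω : Config n, staticWeight n p ω * (f ω - c) ^ 2
      = staticWeight n p ω * (f ω * f ω) - (2 * c) * (staticWeight n p ω * f ω)
        + (c * c) * staticWeight n p ω := by
    intro ω; ring
  rw [staticExp, Finset.sum_congr rfl (fun ω _ => hexp ω), Finset.sum_add_distrib,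
    Finset.sum_sub_distrib, ← Finset.mul_sum, ← Finset.mul_sum, sum_staticWeight]
  have h2 : ∑ ω : Config n, staticWeight n p ω * f ω = c := rfl
  have h3 : staticExp n p (fun ω => f ω * f ω)
      = ∑ ω : Config n, staticWeight n p ω * (f ω * f ω) := rfl
  rw [h2, h3]
  ring

lemma Var_formula (hp : p ≠ 0) :
    staticVar n p (cliqueCountR n k) =
      ∑ A ∈ Finset.powersetCard (k + 1) (Finset.univ : Finset (Fin n)),
        ∑ B ∈ Finset.powersetCard (k + 1) (Finset.univ : Finset (Fin n)),
          p ^ (ES A).card * p ^ (ES B).card * ((1 / p) ^ (ES A ∩ ES B).card - 1) := by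
  classical
  set P := Finset.powersetCard (k + 1) (Finset.univ : Finset (Fin n)) with hP
  rw [staticVar_eq]
  have h1 : staticExp n p (fun ω => cliqueCountR n k ω * cliqueCountR n k ω)
      = ∑ A ∈ P, ∑ B ∈ P, staticExp n p (fun ω => cliqueInd A ω * cliqueInd B ω) := by
    have : (fun ω => cliqueCountR n k ω * cliqueCountR n k ω)
        = fun ω => ∑ A ∈ P, ∑ B ∈ P, cliqueInd A ω * cliqueInd B ω := by
      funext ω
      rw [cliqueCountR_eq_sum, Finset.sum_mul_sum]
    rw [this]
    rw [staticExp_sum]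
    apply Finset.sum_congr rfl
    intro A _
    rw [staticExp_sum]
  have h2 : staticExp n p (cliqueCountR n k) = ∑ A ∈ P, p ^ (ES A).card := by
    have : staticExp n p (cliqueCountR n k) = ∑ A ∈ P, staticExp n p (cliqueInd A) := by
      rw [show cliqueCountR n k = fun ω => ∑ A ∈ P, cliqueInd A ω from funext cliqueCountR_eq_sum]
      exact staticExp_sum p P _
    rw [this]
    exact Finset.sum_congr rfl (fun A _ => staticExp_single p A)
  rw [h1, h2]
  rw [Finset.sum_mul_sum]
  rw [← Finset.sum_sub_distrib]
  apply Finset.sum_congr rfl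
  intro A _
  rw [← Finset.sum_sub_distrib]
  apply Finset.sum_congr rfl
  intro B _
  rw [staticExp_pair p hp]
  ring

lemma Cov_formula (hp : p ≠ 0) :
    dynExp lam p n ![t₁, t₂] (fun ω => cliqueCountR n k (ω 0) * cliqueCountR n k (ω 1))
      - dynExp lam p n ![t₁, t₂] (fun ω => cliqueCountR n k (ω 0))
        * dynExp lam p n ![t₁, t₂] (fun ω => cliqueCountR n k (ω 1))
      = ∑ A ∈ Finset.powersetCard (k + 1) (Finset.univ : Finset (Fin n)),
        ∑ B ∈ Finset.powersetCard (k + 1) (Finset.univ : Finset (Fin n)),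
          p ^ (ES A).card * p ^ (ES B).card *
            (((p + (1 - p) * Real.exp (-lam * (t₂ - t₁))) / p) ^ (ES A ∩ ES B).card - 1) := by
  classical
  set P := Finset.powersetCard (k + 1) (Finset.univ : Finset (Fin n)) with hP
  have h1 : dynExp lam p n ![t₁, t₂] (fun ω => cliqueCountR n k (ω 0) * cliqueCountR n k (ω 1))
      = ∑ A ∈ P, ∑ B ∈ P,
          dynExp lam p n ![t₁, t₂] (fun ω => cliqueInd A (ω 0) * cliqueInd B (ω 1)) := by
    have : (fun ω : Fin 2 → Config n => cliqueCountR n k (ω 0) * cliqueCountR n k (ω 1))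
        = fun ω => ∑ A ∈ P, ∑ B ∈ P, cliqueInd A (ω 0) * cliqueInd B (ω 1) := by
      funext ω
      rw [cliqueCountR_eq_sum, cliqueCountR_eq_sum, Finset.sum_mul_sum]
    rw [this, dynExp_sum]
    apply Finset.sum_congr rfl
    intro A _
    rw [dynExp_sum]
  have h2 : dynExp lam p n ![t₁, t₂] (fun ω => cliqueCountR n k (ω 0))
      = ∑ A ∈ P, p ^ (ES A).card := by
    have : (fun ω : Fin 2 → Config n => cliqueCountR n k (ω 0))
        = fun ω => ∑ A ∈ P, cliqueInd A (ω 0) := by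
      funext ω; rw [cliqueCountR_eq_sum]
    rw [this, dynExp_sum]
    exact Finset.sum_congr rfl (fun A _ => dynExp_single0 lam p t₁ t₂ A)
  have h3 : dynExp lam p n ![t₁, t₂] (fun ω => cliqueCountR n k (ω 1))
      = ∑ B ∈ P, p ^ (ES B).card := by
    have : (fun ω : Fin 2 → Config n => cliqueCountR n k (ω 1))
        = fun ω => ∑ B ∈ P, cliqueInd B (ω 1) := by
      funext ω; rw [cliqueCountR_eq_sum]
    rw [this, dynExp_sum]
    exact Finset.sum_congr rfl (fun B _ => dynExp_single1 lam p t₁ t₂ B)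
  rw [h1, h2, h3, Finset.sum_mul_sum, ← Finset.sum_sub_distrib]
  apply Finset.sum_congr rfl
  intro A _
  rw [← Finset.sum_sub_distrib]
  apply Finset.sum_congr rfl
  intro B _
  rw [dynExp_pair lam p t₁ t₂ hp]
  ring

end DynER5
namespace DynER6
open DynER DynER2 DynER3 DynER4 DynER5

variable {n : ℕ}

lemma pair_bound (p θ : ℝ) (hp0 : 0 < p) (hp1 : p < 1) (hθ0 : 0 ≤ θ) (hθ1 : θ ≤ 1)
    (A B : Finset (Fin n)) :
    |p ^ (ES A).card * p ^ (ES B).card *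
        (((p + (1 - p) * θ) / p) ^ (ES A ∩ ES B).card - 1)
      - θ * (p ^ (ES A).card * p ^ (ES B).card * ((1 / p) ^ (ES A ∩ ES B).card - 1))|
      ≤ if 3 ≤ (A ∩ B).card then
          p ^ (ES A).card * p ^ (ES B).card * (1 / p) ^ (ES A ∩ ES B).card else 0 := by
  classical
  set x := p + (1 - p) * θ with hx
  set m := (ES A ∩ ES B).card with hm
  set P1 := p ^ (ES A).card * p ^ (ES B).card with hP1
  have hP1pos : 0 < P1 := mul_pos (pow_pos hp0 _) (pow_pos hp0 _)
  have hxp : p ≤ x := by nlinarith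
  have hx1 : x ≤ 1 := by nlinarith
  have hxq : (1 : ℝ) ≤ x / p := (one_le_div hp0).mpr hxp
  have hxq' : x / p ≤ 1 / p := by gcongr
  have h1p : (1 : ℝ) ≤ 1 / p := (one_le_div hp0).mpr hp1.le
  have hc1 : (1 : ℝ) ≤ (x / p) ^ m := one_le_pow₀ hxq
  have hc2 : (x / p) ^ m ≤ (1 / p) ^ m :=
    pow_le_pow_left₀ (le_trans zero_le_one hxq) hxq' m
  have hv1 : (1 : ℝ) ≤ (1 / p) ^ m := one_le_pow₀ h1p
  by_cases h3 : 3 ≤ (A ∩ B).card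
  · rw [if_pos h3]
    have hcov0 : 0 ≤ P1 * ((x / p) ^ m - 1) := by nlinarith
    have hcovv : P1 * ((x / p) ^ m - 1) ≤ P1 * ((1 / p) ^ m - 1) := by nlinarith
    have hθv0 : 0 ≤ θ * (P1 * ((1 / p) ^ m - 1)) := by nlinarith
    have hθvv : θ * (P1 * ((1 / p) ^ m - 1)) ≤ P1 * ((1 / p) ^ m - 1) := by nlinarith
    rw [abs_sub_le_iff]
    constructor <;> nlinarith
  · rw [if_neg h3]
    have hmval : m = (A ∩ B).card.choose 2 := by
      rw [hm, ES_inter, card_ES]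
    have hm1 : m ≤ 1 := by
      rw [hmval]
      interval_cases h : (A ∩ B).card
      · decide
      · decide
      · decide
    interval_cases m
    · simp
    · have : P1 * (x / p - 1) - θ * (P1 * (1 / p - 1)) = 0 := by
        field_simp
        ring
      rw [pow_one, pow_one, this, abs_zero]
end DynER6
namespace DynER7
open DynER DynER2 DynER3 DynER4 DynER5 DynER6

variable {n k : ℕ}

lemma choose_le_two_pow (m j : ℕ) : m.choose j ≤ 2 ^ m := by
  by_cases h : j ≤ m
  · calc m.choose j ≤ ∑ i ∈ Finset.range (m + 1), m.choose i :=
        Finset.single_le_sum (fun i _ => Nat.zero_le _) (Finset.mem_range.mpr (by omega))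
      _ = 2 ^ m := Nat.sum_range_choose m
  · rw [Nat.choose_eq_zero_of_lt (by omega)]
    exact Nat.zero_le _

lemma count_upper (A : Finset (Fin n)) (hA : A.card = k + 1) (j : ℕ) :
    ((Finset.powersetCard (k + 1) (Finset.univ : Finset (Fin n))).filter
        (fun B => (A ∩ B).card = j)).card ≤ 2 ^ (k + 1) * n ^ (k + 1 - j) := by
  classical
  have hle : ((Finset.powersetCard (k + 1) (Finset.univ : Finset (Fin n))).filter
        (fun B => (A ∩ B).card = j)).card
      ≤ ((A.powersetCard j) ×ˢ ((Finset.univ : Finset (Fin n)).powersetCard (k + 1 - j))).card := by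
    apply Finset.card_le_card_of_injOn (fun B => (A ∩ B, B \ A))
    · intro B hB
      simp only [Finset.mem_coe, Finset.mem_filter, Finset.mem_powersetCard] at hB
      obtain ⟨⟨hBsub, hBcard⟩, hj⟩ := hB
      rw [Finset.mem_coe, Finset.mem_product, Finset.mem_powersetCard, Finset.mem_powersetCard]
      refine ⟨⟨Finset.inter_subset_left, hj⟩, ⟨Finset.subset_univ _, ?_⟩⟩
      have h1 : (B ∩ A).card + (B \ A).card = B.card := Finset.card_inter_add_card_sdiff B A
      rw [Finset.inter_comm] at h1
      show (B \ A).card = k + 1 - j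
      omega
    · intro B₁ h₁ B₂ h₂ hEq
      have hu : ∀ B : Finset (Fin n), (A ∩ B) ∪ (B \ A) = B := by
        intro B
        ext a
        simp only [Finset.mem_union, Finset.mem_inter, Finset.mem_sdiff]
        tauto
      have h1 := congrArg Prod.fst hEq
      have h2 := congrArg Prod.snd hEq
      simp only at h1 h2
      rw [← hu B₁, ← hu B₂, h1, h2]
  calc _ ≤ _ := hle
    _ ≤ 2 ^ (k + 1) * n ^ (k + 1 - j) := by
      rw [Finset.card_product, Finset.card_powersetCard, Finset.card_powersetCard, hA,
        Finset.card_univ, Fintype.card_fin]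
      exact Nat.mul_le_mul (choose_le_two_pow _ _) (Nat.choose_le_pow n (k + 1 - j))

lemma count_lower (hk : 1 ≤ k) (hn : 3 * (k + 1) ≤ n) :
    (n / 3).choose 2 * ((n / 3).choose (k - 1) * (n / 3).choose (k - 1))
      ≤ (((Finset.powersetCard (k + 1) (Finset.univ : Finset (Fin n))) ×ˢ
          (Finset.powersetCard (k + 1) (Finset.univ : Finset (Fin n)))).filter
          (fun AB => (AB.1 ∩ AB.2).card = 2)).card := by
  classical
  set b := n / 3 with hb
  have hbn : 3 * b ≤ n := by omega
  have hbk : k + 1 ≤ b := by omega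
  set V : ℕ → Finset (Fin n) := fun i =>
    Finset.univ.filter (fun v : Fin n => i * b ≤ v.val ∧ v.val < (i + 1) * b) with hV
  have hVcard : ∀ i, i < 3 → (V i).card = b := by
    intro i hi
    have hrel : (i + 1) * b = i * b + b := by ring
    have hle3 : (i + 1) * b ≤ 3 * b := by nlinarith
    rw [← Finset.card_range b]
    apply Finset.card_bij' (fun (v : Fin n) (_ : v ∈ V i) => v.val - i * b)
      (fun m hm => (⟨m + i * b, by
        simp only [Finset.mem_range] at hm
        omega⟩ : Fin n))
    all_goals intro a ha
    all_goals try simp only [hV, Finset.mem_filter, Finset.mem_range, Finset.mem_univ,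
      true_and, Fin.val_mk] at ha
    all_goals try apply Fin.ext
    all_goals try simp only [hV, Finset.mem_filter, Finset.mem_range, Finset.mem_univ,
      true_and, Fin.val_mk]
    all_goals omega
  have hVmem : ∀ i (v : Fin n), v ∈ V i ↔ i * b ≤ v.val ∧ v.val < (i + 1) * b := by
    intro i v; simp [hV]
  have hdisj : ∀ i j : ℕ, i < j → ∀ v : Fin n, v ∈ V i → v ∈ V j → False := by
    intro i j hij v hvi hvj
    rw [hVmem] at hvi hvj
    have : (i + 1) * b ≤ j * b := Nat.mul_le_mul_right b (by omega)
    omega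
  set Q := ((V 0).powersetCard 2) ×ˢ (((V 1).powersetCard (k - 1)) ×ˢ
    ((V 2).powersetCard (k - 1))) with hQ
  set T := (((Finset.powersetCard (k + 1) (Finset.univ : Finset (Fin n))) ×ˢ
          (Finset.powersetCard (k + 1) (Finset.univ : Finset (Fin n)))).filter
          (fun AB => (AB.1 ∩ AB.2).card = 2)) with hT
  have hmain : Q.card ≤ T.card := by
    apply Finset.card_le_card_of_injOn
      (fun x : Finset (Fin n) × Finset (Fin n) × Finset (Fin n) =>
        (x.1 ∪ x.2.1, x.1 ∪ x.2.2))
    · rintro ⟨D, E, F⟩ hx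
      simp only [Finset.mem_coe, hQ, Finset.mem_product, Finset.mem_powersetCard] at hx
      obtain ⟨⟨hD, hD2⟩, ⟨hE, hE2⟩, ⟨hF, hF2⟩⟩ := hx
      have hDE : Disjoint D E := Finset.disjoint_left.mpr
        (fun ha ha' => fun h => hdisj 0 1 (by norm_num) _ (hD ha') (hE h))
      have hDF : Disjoint D F := Finset.disjoint_left.mpr
        (fun ha ha' => fun h => hdisj 0 2 (by norm_num) _ (hD ha') (hF h))
      have hEF : Disjoint E F := Finset.disjoint_left.mpr
        (fun ha ha' => fun h => hdisj 1 2 (by norm_num) _ (hE ha') (hF h))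
      simp only [Finset.mem_coe, hT, Finset.mem_filter, Finset.mem_product, Finset.mem_powersetCard]
      refine ⟨⟨⟨Finset.subset_univ _, ?_⟩, ⟨Finset.subset_univ _, ?_⟩⟩, ?_⟩
      · rw [Finset.card_union_of_disjoint hDE]; omega
      · rw [Finset.card_union_of_disjoint hDF]; omega
      · have hinter : (D ∪ E) ∩ (D ∪ F) = D := by
          ext a
          simp only [Finset.mem_inter, Finset.mem_union]
          constructor
          · rintro ⟨h1 | h1, h2 | h2⟩
            · exact h1
            · exact h1
            · exact h2
            · exact ((Finset.disjoint_left.mp hEF) h1 h2).elim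
          · intro h; exact ⟨Or.inl h, Or.inl h⟩
        show ((D ∪ E) ∩ (D ∪ F)).card = 2
        rw [hinter, hD2]
    · rintro ⟨D, E, F⟩ hx ⟨D', E', F'⟩ hx' hEq
      simp only [hQ, Finset.mem_coe, Finset.mem_product, Finset.mem_powersetCard] at hx hx'
      obtain ⟨⟨hD, hD2⟩, ⟨hE, hE2⟩, ⟨hF, hF2⟩⟩ := hx
      obtain ⟨⟨hD', hD2'⟩, ⟨hE', hE2'⟩, ⟨hF', hF2'⟩⟩ := hx'
      have h1 := congrArg Prod.fst hEq
      have h2 := congrArg Prod.snd hEq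
      simp only at h1 h2
      have hface : ∀ (D E F : Finset (Fin n)), D ⊆ V 0 → E ⊆ V 1 → F ⊆ V 2 →
          (D ∪ E) ∩ (D ∪ F) = D := by
        intro D E F hD hE hF
        ext a
        simp only [Finset.mem_inter, Finset.mem_union]
        constructor
        · rintro ⟨h1 | h1, h2 | h2⟩
          · exact h1
          · exact h1
          · exact h2
          · exact (hdisj 1 2 (by norm_num) a (hE h1) (hF h2)).elim
        · intro h; exact ⟨Or.inl h, Or.inl h⟩
      have hDeq : D = D' := by
        rw [← hface D E F hD hE hF, ← hface D' E' F' hD' hE' hF', h1, h2]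
      have hEeq : E = E' := by
        have hEsub : ∀ (D E : Finset (Fin n)), D ⊆ V 0 → E ⊆ V 1 → (D ∪ E) \ D = E := by
          intro D E hD hE
          ext a
          simp only [Finset.mem_sdiff, Finset.mem_union]
          constructor
          · rintro ⟨h1 | h1, h2⟩
            · exact absurd h1 h2
            · exact h1
          · intro h
            exact ⟨Or.inr h, fun h' => hdisj 0 1 (by norm_num) a (hD h') (hE h)⟩
        rw [← hEsub D E hD hE, ← hEsub D' E' hD' hE', h1, hDeq]
      have hFeq : F = F' := by
        have hFsub : ∀ (D F : Finset (Fin n)), D ⊆ V 0 → F ⊆ V 2 → (D ∪ F) \ D = F := by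
          intro D F hD hF
          ext a
          simp only [Finset.mem_sdiff, Finset.mem_union]
          constructor
          · rintro ⟨h1 | h1, h2⟩
            · exact absurd h1 h2
            · exact h1
          · intro h
            exact ⟨Or.inr h, fun h' => hdisj 0 2 (by norm_num) a (hD h') (hF h)⟩
        rw [← hFsub D F hD hF, ← hFsub D' F' hD' hF', h2, hDeq]
      simp only [Prod.mk.injEq]
      exact ⟨hDeq, hEeq, hFeq⟩
  have hQcard : Q.card = b.choose 2 * (b.choose (k - 1) * b.choose (k - 1)) := by
    rw [hQ, Finset.card_product, Finset.card_product, Finset.card_powersetCard,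
      Finset.card_powersetCard, Finset.card_powersetCard, hVcard 0 (by norm_num),
      hVcard 1 (by norm_num), hVcard 2 (by norm_num)]
  rw [← hQcard]
  exact hmain

end DynER7
namespace DynER8
open DynER DynER2 DynER3 DynER4 DynER5 DynER6 DynER7

variable {n k : ℕ}

lemma ES_card_mem {A : Finset (Fin n)}
    (hA : A ∈ Finset.powersetCard (k + 1) (Finset.univ : Finset (Fin n))) :
    (ES A).card = (k + 1).choose 2 := by
  rw [card_ES, (Finset.mem_powersetCard.mp hA).2]

lemma Num_bound (p θ : ℝ) (hp0 : 0 < p) (hp1 : p < 1) (hθ0 : 0 ≤ θ) (hθ1 : θ ≤ 1) :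
    |(∑ A ∈ Finset.powersetCard (k + 1) (Finset.univ : Finset (Fin n)),
        ∑ B ∈ Finset.powersetCard (k + 1) (Finset.univ : Finset (Fin n)),
          p ^ (ES A).card * p ^ (ES B).card *
            (((p + (1 - p) * θ) / p) ^ (ES A ∩ ES B).card - 1))
      - θ * (∑ A ∈ Finset.powersetCard (k + 1) (Finset.univ : Finset (Fin n)),
          ∑ B ∈ Finset.powersetCard (k + 1) (Finset.univ : Finset (Fin n)),
            p ^ (ES A).card * p ^ (ES B).card * ((1 / p) ^ (ES A ∩ ES B).card - 1))|
      ≤ (n : ℝ) ^ (k + 1) * ∑ j ∈ Finset.range (k + 2),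
          (if 3 ≤ j then
            (2 ^ (k + 1) * n ^ (k + 1 - j) : ℝ) *
              (p ^ (k + 1).choose 2 * p ^ (k + 1).choose 2 * (1 / p) ^ j.choose 2)
          else 0) := by
  classical
  set P := Finset.powersetCard (k + 1) (Finset.univ : Finset (Fin n)) with hP
  set BND : ℝ := ∑ j ∈ Finset.range (k + 2),
          (if 3 ≤ j then
            (2 ^ (k + 1) * n ^ (k + 1 - j) : ℝ) *
              (p ^ (k + 1).choose 2 * p ^ (k + 1).choose 2 * (1 / p) ^ j.choose 2)
          else 0) with hBND
  rw [Finset.mul_sum]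
  rw [← Finset.sum_sub_distrib]
  have habs : |∑ A ∈ P, (∑ B ∈ P, p ^ (ES A).card * p ^ (ES B).card *
        (((p + (1 - p) * θ) / p) ^ (ES A ∩ ES B).card - 1)
      - θ * ∑ B ∈ P, p ^ (ES A).card * p ^ (ES B).card *
        ((1 / p) ^ (ES A ∩ ES B).card - 1))|
      ≤ ∑ A ∈ P, ∑ B ∈ P,
          |p ^ (ES A).card * p ^ (ES B).card *
              (((p + (1 - p) * θ) / p) ^ (ES A ∩ ES B).card - 1)
            - θ * (p ^ (ES A).card * p ^ (ES B).card *
              ((1 / p) ^ (ES A ∩ ES B).card - 1))| := by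
    refine (Finset.abs_sum_le_sum_abs _ _).trans (Finset.sum_le_sum ?_)
    intro A _
    rw [Finset.mul_sum, ← Finset.sum_sub_distrib]
    exact Finset.abs_sum_le_sum_abs _ _
  refine habs.trans ?_
  have hinner : ∀ A ∈ P, (∑ B ∈ P,
      |p ^ (ES A).card * p ^ (ES B).card *
          (((p + (1 - p) * θ) / p) ^ (ES A ∩ ES B).card - 1)
        - θ * (p ^ (ES A).card * p ^ (ES B).card *
          ((1 / p) ^ (ES A ∩ ES B).card - 1))|) ≤ BND := by
    intro A hA
    have hstep1 : ∀ B ∈ P, |p ^ (ES A).card * p ^ (ES B).card *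
          (((p + (1 - p) * θ) / p) ^ (ES A ∩ ES B).card - 1)
        - θ * (p ^ (ES A).card * p ^ (ES B).card *
          ((1 / p) ^ (ES A ∩ ES B).card - 1))|
        ≤ (if 3 ≤ (A ∩ B).card then
            (p ^ (k + 1).choose 2 * p ^ (k + 1).choose 2 * (1 / p) ^ (A ∩ B).card.choose 2)
          else 0) := by
      intro B hB
      rw [ES_card_mem hA, ES_card_mem hB, ES_inter, card_ES]
      have := pair_bound p θ hp0 hp1 hθ0 hθ1 A B
      rwa [ES_card_mem hA, ES_card_mem hB, ES_inter, card_ES] at this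
    refine (Finset.sum_le_sum hstep1).trans ?_
    have hfib : ∑ B ∈ P, (if 3 ≤ (A ∩ B).card then
            (p ^ (k + 1).choose 2 * p ^ (k + 1).choose 2 * (1 / p) ^ (A ∩ B).card.choose 2)
          else 0)
        = ∑ j ∈ Finset.range (k + 2), ∑ B ∈ P.filter (fun B => (A ∩ B).card = j),
            (if 3 ≤ (A ∩ B).card then
              (p ^ (k + 1).choose 2 * p ^ (k + 1).choose 2 * (1 / p) ^ (A ∩ B).card.choose 2)
            else 0) := by
      symm
      apply Finset.sum_fiberwise_of_maps_to
      intro B hB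
      rw [Finset.mem_range]
      have h1 : (A ∩ B).card ≤ B.card := Finset.card_le_card Finset.inter_subset_right
      rw [(Finset.mem_powersetCard.mp hB).2] at h1
      omega
    rw [hfib]
    apply Finset.sum_le_sum
    intro j hj
    have hconst : ∀ B ∈ P.filter (fun B => (A ∩ B).card = j),
        (if 3 ≤ (A ∩ B).card then
          (p ^ (k + 1).choose 2 * p ^ (k + 1).choose 2 * (1 / p) ^ (A ∩ B).card.choose 2)
        else 0)
        = (if 3 ≤ j then
          (p ^ (k + 1).choose 2 * p ^ (k + 1).choose 2 * (1 / p) ^ j.choose 2) else 0) := by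
      intro B hB
      rw [(Finset.mem_filter.mp hB).2]
    rw [Finset.sum_congr rfl hconst, Finset.sum_const, nsmul_eq_mul]
    by_cases h3 : 3 ≤ j
    · rw [if_pos h3, if_pos h3]
      apply mul_le_mul_of_nonneg_right
      · have hc := count_upper (k := k) A (Finset.mem_powersetCard.mp hA).2 j
        calc ((P.filter (fun B => (A ∩ B).card = j)).card : ℝ)
            ≤ ((2 ^ (k + 1) * n ^ (k + 1 - j) : ℕ) : ℝ) := by exact_mod_cast hc
          _ = (2 ^ (k + 1) * n ^ (k + 1 - j) : ℝ) := by push_cast; ring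
      · positivity
    · rw [if_neg h3, if_neg h3, mul_zero]
  calc ∑ A ∈ P, ∑ B ∈ P,
          |p ^ (ES A).card * p ^ (ES B).card *
              (((p + (1 - p) * θ) / p) ^ (ES A ∩ ES B).card - 1)
            - θ * (p ^ (ES A).card * p ^ (ES B).card *
              ((1 / p) ^ (ES A ∩ ES B).card - 1))|
      ≤ ∑ _A ∈ P, BND := Finset.sum_le_sum hinner
    _ = (P.card : ℝ) * BND := by rw [Finset.sum_const, nsmul_eq_mul]
    _ ≤ (n : ℝ) ^ (k + 1) * BND := by
        apply mul_le_mul_of_nonneg_right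
        · rw [hP, Finset.card_powersetCard, Finset.card_univ, Fintype.card_fin]
          calc ((n.choose (k + 1) : ℕ) : ℝ) ≤ ((n ^ (k + 1) : ℕ) : ℝ) := by
                exact_mod_cast Nat.choose_le_pow n (k + 1)
            _ = (n : ℝ) ^ (k + 1) := by push_cast; ring
        · rw [hBND]
          apply Finset.sum_nonneg
          intro j _
          by_cases h3 : 3 ≤ j
          · rw [if_pos h3]; positivity
          · rw [if_neg h3]

lemma Var_lower (p : ℝ) (hp0 : 0 < p) (hp1 : p < 1) (hk : 1 ≤ k) (hn : 3 * (k + 1) ≤ n) :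
    (((n / 3).choose 2 * ((n / 3).choose (k - 1) * (n / 3).choose (k - 1)) : ℕ) : ℝ)
        * (p ^ (k + 1).choose 2 * p ^ (k + 1).choose 2 * (1 / p - 1))
      ≤ ∑ A ∈ Finset.powersetCard (k + 1) (Finset.univ : Finset (Fin n)),
        ∑ B ∈ Finset.powersetCard (k + 1) (Finset.univ : Finset (Fin n)),
          p ^ (ES A).card * p ^ (ES B).card * ((1 / p) ^ (ES A ∩ ES B).card - 1) := by
  classical
  set P := Finset.powersetCard (k + 1) (Finset.univ : Finset (Fin n)) with hP
  set T := ((P ×ˢ P).filter (fun AB => (AB.1 ∩ AB.2).card = 2)) with hT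
  have hprod : ∑ A ∈ P, ∑ B ∈ P,
        p ^ (ES A).card * p ^ (ES B).card * ((1 / p) ^ (ES A ∩ ES B).card - 1)
      = ∑ x ∈ P ×ˢ P,
        p ^ (ES x.1).card * p ^ (ES x.2).card * ((1 / p) ^ (ES x.1 ∩ ES x.2).card - 1) := by
    rw [Finset.sum_product]
  rw [hprod]
  have hnonneg : ∀ x ∈ P ×ˢ P, (0 : ℝ) ≤
      p ^ (ES x.1).card * p ^ (ES x.2).card * ((1 / p) ^ (ES x.1 ∩ ES x.2).card - 1) := by
    intro x _
    have h1 : (1 : ℝ) ≤ 1 / p := (one_le_div hp0).mpr hp1.le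
    have h2 : (1 : ℝ) ≤ (1 / p) ^ (ES x.1 ∩ ES x.2).card := one_le_pow₀ h1
    have h3 : (0 : ℝ) < p ^ (ES x.1).card * p ^ (ES x.2).card :=
      mul_pos (pow_pos hp0 _) (pow_pos hp0 _)
    nlinarith
  have hsub : ∑ x ∈ T,
        p ^ (ES x.1).card * p ^ (ES x.2).card * ((1 / p) ^ (ES x.1 ∩ ES x.2).card - 1)
      ≤ ∑ x ∈ P ×ˢ P,
        p ^ (ES x.1).card * p ^ (ES x.2).card * ((1 / p) ^ (ES x.1 ∩ ES x.2).card - 1) :=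
    Finset.sum_le_sum_of_subset_of_nonneg (Finset.filter_subset _ _)
      (fun x hx _ => hnonneg x hx)
  refine le_trans ?_ hsub
  have hval : ∀ x ∈ T,
      p ^ (ES x.1).card * p ^ (ES x.2).card * ((1 / p) ^ (ES x.1 ∩ ES x.2).card - 1)
      = p ^ (k + 1).choose 2 * p ^ (k + 1).choose 2 * (1 / p - 1) := by
    intro x hx
    rw [hT, Finset.mem_filter, Finset.mem_product] at hx
    obtain ⟨⟨hx1, hx2⟩, hx3⟩ := hx
    rw [ES_card_mem hx1, ES_card_mem hx2, ES_inter, card_ES, hx3]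
    norm_num
  rw [Finset.sum_congr rfl hval, Finset.sum_const, nsmul_eq_mul]
  apply mul_le_mul_of_nonneg_right
  · exact_mod_cast count_lower hk hn
  · have h1 : (1 : ℝ) ≤ 1 / p := (one_le_div hp0).mpr hp1.le
    have h2 : (0 : ℝ) < p ^ (k + 1).choose 2 := pow_pos hp0 _
    nlinarith

end DynER8
namespace DynER9
open DynER DynER2 DynER3 DynER4 DynER5 DynER6 DynER7 DynER8

lemma psi_neg (k j : ℕ) (α : ℝ) (hj3 : 3 ≤ j) (hjk : j ≤ k + 1)
    (hk : 1 ≤ k) (hα : -(1 / (k : ℝ)) < α) (hα0 : α < 0) :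
    (2 : ℝ) - j + α * (1 - (j.choose 2 : ℝ)) < 0 := by
  have hc : (j.choose 2 : ℝ) = j * (j - 1) / 2 := Nat.cast_choose_two (K := ℝ) j
  have hk2 : 2 ≤ k := by omega
  have hjr : (3 : ℝ) ≤ (j : ℝ) := by exact_mod_cast hj3
  have hjkr : (j : ℝ) ≤ (k : ℝ) + 1 := by exact_mod_cast hjk
  have hkr : (2 : ℝ) ≤ (k : ℝ) := by exact_mod_cast hk2
  have hkpos : (0 : ℝ) < (k : ℝ) := by linarith
  have hcge : (3 : ℝ) ≤ (j.choose 2 : ℝ) := by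
    rw [hc]; nlinarith
  have h1 : α * (1 - (j.choose 2 : ℝ)) < (-(1 / (k : ℝ))) * (1 - (j.choose 2 : ℝ)) := by
    apply mul_lt_mul_of_neg_right hα
    linarith
  have h2 : (-(1 / (k : ℝ))) * (1 - (j.choose 2 : ℝ)) = ((j.choose 2 : ℝ) - 1) / k := by
    field_simp
    ring
  have h3 : ((j.choose 2 : ℝ) - 1) / k ≤ (j : ℝ) - 2 := by
    rw [div_le_iff₀ hkpos, hc]
    nlinarith
  linarith

variable {n k : ℕ}

lemma M_lower (hk : 1 ≤ k) (hn : 24 * (k + 2) ≤ n) :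
    ((n : ℝ) / 24) ^ (2 * k) / (2 * ((k - 1).factorial : ℝ) ^ 2)
      ≤ (((n / 3).choose 2 * ((n / 3).choose (k - 1) * (n / 3).choose (k - 1)) : ℕ) : ℝ) := by
  have hb1 : n ≤ 24 * (n / 3 - 1) := by omega
  have hb2 : n ≤ 24 * (n / 3 + 1 - (k - 1)) := by omega
  have hN24 : (0 : ℝ) ≤ (n : ℝ) / 24 := by positivity
  have hr1 : (n : ℝ) / 24 ≤ ((n / 3 - 1 : ℕ) : ℝ) := by
    rw [div_le_iff₀ (by norm_num : (0:ℝ) < 24)]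
    calc (n : ℝ) ≤ ((24 * (n / 3 - 1) : ℕ) : ℝ) := by exact_mod_cast hb1
      _ = ((n / 3 - 1 : ℕ) : ℝ) * 24 := by push_cast; ring
  have hr2 : (n : ℝ) / 24 ≤ ((n / 3 + 1 - (k - 1) : ℕ) : ℝ) := by
    rw [div_le_iff₀ (by norm_num : (0:ℝ) < 24)]
    calc (n : ℝ) ≤ ((24 * (n / 3 + 1 - (k - 1)) : ℕ) : ℝ) := by exact_mod_cast hb2
      _ = ((n / 3 + 1 - (k - 1) : ℕ) : ℝ) * 24 := by push_cast; ring
  have hch2 : (((n / 3 - 1 : ℕ)) ^ 2 : ℝ) / (2 : ℕ).factorial ≤ ((n / 3).choose 2 : ℝ) := by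
    have := Nat.pow_le_choose (α := ℝ) 2 (n / 3)
    have heq : n / 3 + 1 - 2 = n / 3 - 1 := by omega
    rwa [heq] at this
  have hchk : (((n / 3 + 1 - (k - 1) : ℕ)) ^ (k - 1) : ℝ) / (k - 1).factorial
      ≤ ((n / 3).choose (k - 1) : ℝ) :=
    Nat.pow_le_choose (α := ℝ) (k - 1) (n / 3)
  have hf2 : ((2 : ℕ).factorial : ℝ) = 2 := by norm_num [Nat.factorial]
  have hfpos : (0 : ℝ) < ((k - 1).factorial : ℝ) := by
    exact_mod_cast (k - 1).factorial_pos
  -- lower-bound pieces by powers of n/24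
  have hA : ((n : ℝ) / 24) ^ 2 / 2 ≤ ((n / 3).choose 2 : ℝ) := by
    refine le_trans ?_ hch2
    rw [hf2]
    apply div_le_div_of_nonneg_right ?_ (by norm_num : (0:ℝ) ≤ 2) |>.trans_eq rfl
    exact pow_le_pow_left₀ hN24 hr1 2
  have hB : ((n : ℝ) / 24) ^ (k - 1) / ((k - 1).factorial : ℝ)
      ≤ ((n / 3).choose (k - 1) : ℝ) := by
    refine le_trans ?_ hchk
    apply div_le_div_of_nonneg_right ?_ hfpos.le |>.trans_eq rfl
    exact pow_le_pow_left₀ hN24 hr2 (k - 1)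
  have hsplit : (2 : ℕ) * k = 2 + ((k - 1) + (k - 1)) := by omega
  push_cast
  rw [hsplit, pow_add, pow_add]
  have hBpos : (0 : ℝ) ≤ ((n : ℝ) / 24) ^ (k - 1) / ((k - 1).factorial : ℝ) := by positivity
  calc ((n:ℝ)/24) ^ 2 * (((n:ℝ)/24) ^ (k-1) * ((n:ℝ)/24) ^ (k-1))
        / (2 * ((k - 1).factorial : ℝ) ^ 2)
      = (((n:ℝ)/24) ^ 2 / 2) * ((((n:ℝ)/24) ^ (k-1) / ((k - 1).factorial : ℝ))
        * (((n:ℝ)/24) ^ (k-1) / ((k - 1).factorial : ℝ))) := by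
        rw [div_mul_div_comm, div_mul_div_comm]
        congr 1
        ring
    _ ≤ ((n / 3).choose 2 : ℝ) * (((n / 3).choose (k - 1) : ℝ)
        * ((n / 3).choose (k - 1) : ℝ)) := by
        apply mul_le_mul hA ?_ (by positivity) (by positivity)
        exact mul_le_mul hB hB hBpos (le_trans hBpos hB)

end DynER9
namespace DynER9b
open DynER DynER2 DynER3 DynER4 DynER5 DynER6 DynER7 DynER8 DynER9

lemma keystep (k : ℕ) (hk : 1 ≤ k) (α : ℝ) (n j : ℕ)
    (hj3 : 3 ≤ j) (hjk : j ≤ k + 1) (hn : 24 * (k + 2) ≤ n)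
    (hp2 : ((n : ℝ) ^ α) ≤ 1 / 2) (hp0 : 0 < ((n : ℝ) ^ α)) :
    ((n : ℝ) ^ (k + 1) * ((2 ^ (k + 1) * (n : ℝ) ^ (k + 1 - j) : ℝ) *
        (((n : ℝ) ^ α) ^ (k + 1).choose 2 * ((n : ℝ) ^ α) ^ (k + 1).choose 2 *
          (1 / ((n : ℝ) ^ α)) ^ j.choose 2)))
      / ((((n / 3).choose 2 * ((n / 3).choose (k - 1) * (n / 3).choose (k - 1)) : ℕ) : ℝ) *
          (((n : ℝ) ^ α) ^ (k + 1).choose 2 * ((n : ℝ) ^ α) ^ (k + 1).choose 2 *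
            (1 / ((n : ℝ) ^ α) - 1)))
    ≤ (2 ^ (k + 2) * (2 * ((k - 1).factorial : ℝ) ^ 2) * 24 ^ (2 * k)) *
        (n : ℝ) ^ ((2 : ℝ) - j + α * (1 - (j.choose 2 : ℝ))) := by
  have hn1 : 1 ≤ n := by omega
  set N : ℝ := (n : ℝ) with hN
  have hN0 : (0 : ℝ) < N := by
    rw [hN]; exact_mod_cast Nat.pos_of_ne_zero (by omega)
  set P : ℝ := N ^ α with hPdef
  set C : ℕ := (k + 1).choose 2 with hC
  set m : ℕ := j.choose 2 with hm
  set Kf : ℝ := 2 * ((k - 1).factorial : ℝ) ^ 2 with hKf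
  set M : ℝ := (((n / 3).choose 2 * ((n / 3).choose (k - 1) * (n / 3).choose (k - 1)) : ℕ) : ℝ)
    with hM
  have hKfpos : 0 < Kf := by
    rw [hKf]
    have : (0 : ℝ) < ((k - 1).factorial : ℝ) := by exact_mod_cast (k - 1).factorial_pos
    positivity
  have hPC : (0 : ℝ) < P ^ C * P ^ C := by positivity
  have hiv : 1 / (2 * P) ≤ 1 / P - 1 := by
    have heq : 1 / P - 1 - 1 / (2 * P) = (1 - 2 * P) / (2 * P) := by
      field_simp
      ring
    have hge : (0 : ℝ) ≤ (1 - 2 * P) / (2 * P) := by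
      apply div_nonneg ?_ (by positivity)
      linarith
    linarith
  have hMlb : (N / 24) ^ (2 * k) / Kf ≤ M := M_lower hk hn
  have hlow_pos : (0 : ℝ) < ((N / 24) ^ (2 * k) / Kf) * (P ^ C * P ^ C * (1 / (2 * P))) := by
    positivity
  have hden_lb : ((N / 24) ^ (2 * k) / Kf) * (P ^ C * P ^ C * (1 / (2 * P)))
      ≤ M * (P ^ C * P ^ C * (1 / P - 1)) := by
    apply mul_le_mul hMlb ?_ ?_ ?_
    · exact mul_le_mul_of_nonneg_left hiv hPC.le
    · positivity
    · exact le_trans (by positivity) hMlb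
  have hnum : (0 : ℝ) ≤ N ^ (k + 1) * ((2 ^ (k + 1) * N ^ (k + 1 - j) : ℝ) *
      (P ^ C * P ^ C * (1 / P) ^ m)) := by positivity
  have step1 : N ^ (k + 1) * ((2 ^ (k + 1) * N ^ (k + 1 - j) : ℝ) *
        (P ^ C * P ^ C * (1 / P) ^ m)) / (M * (P ^ C * P ^ C * (1 / P - 1)))
      ≤ N ^ (k + 1) * ((2 ^ (k + 1) * N ^ (k + 1 - j) : ℝ) *
        (P ^ C * P ^ C * (1 / P) ^ m))
          / (((N / 24) ^ (2 * k) / Kf) * (P ^ C * P ^ C * (1 / (2 * P)))) :=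
    div_le_div_of_nonneg_left hnum hlow_pos hden_lb
  refine step1.trans (le_of_eq ?_)
  have hfs : N ^ (k + 1) * ((2 ^ (k + 1) * N ^ (k + 1 - j) : ℝ) *
        (P ^ C * P ^ C * (1 / P) ^ m))
          / (((N / 24) ^ (2 * k) / Kf) * (P ^ C * P ^ C * (1 / (2 * P))))
      = (2 ^ (k + 2) * Kf * 24 ^ (2 * k)) *
          (N ^ (k + 1) * N ^ (k + 1 - j) * (1 / P) ^ m * P / N ^ (2 * k)) := by
    have hP0' : P ≠ 0 := ne_of_gt hp0
    have hN0' : N ≠ 0 := ne_of_gt hN0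
    have hPC' : P ^ C ≠ 0 := pow_ne_zero _ hP0'
    rw [div_pow]
    field_simp
    have h24 : (1 / 24 : ℝ) ^ (k * 2) * 24 ^ (k * 2) = 1 := by
      rw [← mul_pow]; norm_num
    linear_combination (-(N ^ (k * 2) * 2 ^ k * 4)) * h24
  rw [hfs]
  have hX : N ^ (k + 1) * N ^ (k + 1 - j) * (1 / P) ^ m * P / N ^ (2 * k)
      = N ^ ((2 : ℝ) - j + α * (1 - (m : ℝ))) := by
    have h1 : (1 / P) ^ m = N ^ (-α * (m : ℝ)) := by
      rw [hPdef, one_div, ← Real.rpow_neg hN0.le, ← Real.rpow_natCast (N ^ (-α)) m,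
        ← Real.rpow_mul hN0.le]
    have h2 : N ^ (k + 1) = N ^ ((k + 1 : ℕ) : ℝ) := (Real.rpow_natCast N (k + 1)).symm
    have h3 : N ^ (k + 1 - j) = N ^ ((k + 1 - j : ℕ) : ℝ) := (Real.rpow_natCast N (k + 1 - j)).symm
    have h4 : N ^ (2 * k) = N ^ ((2 * k : ℕ) : ℝ) := (Real.rpow_natCast N (2 * k)).symm
    rw [h1, h2, h3, h4, hPdef, ← Real.rpow_add hN0, ← Real.rpow_add hN0, ← Real.rpow_add hN0,
      ← Real.rpow_sub hN0]
    congr 1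
    have hcast : ((k + 1 - j : ℕ) : ℝ) = (k : ℝ) + 1 - (j : ℝ) := by
      have h5 : ((k + 1 - j : ℕ) : ℝ) = ((k + 1 : ℕ) : ℝ) - (j : ℝ) := Nat.cast_sub hjk
      rw [h5]; push_cast; ring
    rw [hcast]
    push_cast
    ring
  rw [hX]

end DynER9b

namespace DynER10
open DynER DynER2 DynER3 DynER4 DynER5 DynER6 DynER7 DynER8 DynER9 DynER9b

lemma rpow_cast_tendsto (c : ℝ) (hc : c < 0) :
    Filter.Tendsto (fun n : ℕ => (n : ℝ) ^ c) Filter.atTop (nhds 0) := by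
  have h1 : Filter.Tendsto (fun x : ℝ => x ^ c) Filter.atTop (nhds 0) := by
    simpa [neg_neg] using tendsto_rpow_neg_atTop (neg_pos.mpr hc)
  exact h1.comp tendsto_natCast_atTop_atTop

end DynER10


/-- The normalized two-time covariance of the clique counts
converges to `exp(-λ(t₂ - t₁))`. -/
theorem dynamic_covariance_cliqueCount_tendsto (lam : ℝ) (hlam : 0 < lam)
    (k : ℕ) (hk : 1 ≤ k) (α : ℝ)
    (hα : α ∈ Set.Ioo (-(1 / (k : ℝ))) (-(1 / ((k : ℝ) + 1))))
    (t₁ t₂ : ℝ) (ht₁ : 0 ≤ t₁) (ht : t₁ ≤ t₂) :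
    Filter.Tendsto
      (fun n : ℕ =>
        (dynExp lam ((n : ℝ) ^ α) n ![t₁, t₂]
            (fun ω => cliqueCountR n k (ω 0) * cliqueCountR n k (ω 1)) -
          dynExp lam ((n : ℝ) ^ α) n ![t₁, t₂] (fun ω => cliqueCountR n k (ω 0)) *
            dynExp lam ((n : ℝ) ^ α) n ![t₁, t₂] (fun ω => cliqueCountR n k (ω 1))) /
          staticVar n ((n : ℝ) ^ α) (cliqueCountR n k))
      Filter.atTop (nhds (Real.exp (-lam * (t₂ - t₁)))) := by
  classical
  open DynER DynER2 DynER3 DynER4 DynER5 DynER6 DynER7 DynER8 DynER9 DynER9b DynER10 in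
  set θ : ℝ := Real.exp (-lam * (t₂ - t₁)) with hθdef
  obtain ⟨hα1, hα2⟩ := hα
  have hkpos : (0 : ℝ) < (k : ℝ) := by exact_mod_cast hk
  have hα0 : α < 0 := by
    have : (0 : ℝ) < 1 / ((k : ℝ) + 1) := by positivity
    linarith
  have hθ0 : 0 < θ := Real.exp_pos _
  have hθ1 : θ ≤ 1 := by
    rw [hθdef, Real.exp_le_one_iff]
    nlinarith
  set ψ : ℕ → ℝ := fun j => (2 : ℝ) - j + α * (1 - (j.choose 2 : ℝ)) with hψ
  set K : ℝ := 2 ^ (k + 2) * (2 * ((k - 1).factorial : ℝ) ^ 2) * 24 ^ (2 * k) with hK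
  set g : ℕ → ℝ := fun n => ∑ j ∈ Finset.range (k + 2),
    (if 3 ≤ j then K * (n : ℝ) ^ (ψ j) else 0) with hg
  have hgtend : Filter.Tendsto g Filter.atTop (nhds 0) := by
    have hsum : Filter.Tendsto (fun n : ℕ => ∑ j ∈ Finset.range (k + 2),
        (if 3 ≤ j then K * (n : ℝ) ^ (ψ j) else 0)) Filter.atTop
        (nhds (∑ j ∈ Finset.range (k + 2), (0 : ℝ))) := by
      apply tendsto_finset_sum
      intro j hj
      by_cases h3 : 3 ≤ j
      · simp only [if_pos h3]
        have hjk : j ≤ k + 1 := by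
          have := Finset.mem_range.mp hj; omega
        have hψneg : ψ j < 0 := psi_neg k j α h3 hjk hk hα1 hα0
        have := (rpow_cast_tendsto (ψ j) hψneg).const_mul K
        simpa using this
      · simp only [if_neg h3]
        exact tendsto_const_nhds
    simpa using hsum
  have hptend : Filter.Tendsto (fun n : ℕ => (n : ℝ) ^ α) Filter.atTop (nhds 0) :=
    DynER10.rpow_cast_tendsto α hα0
  have hev1 : ∀ᶠ n : ℕ in Filter.atTop, (n : ℝ) ^ α ≤ 1 / 2 :=
    hptend.eventually (eventually_le_nhds (by norm_num))
  have hev2 : ∀ᶠ n : ℕ in Filter.atTop, 24 * (k + 2) ≤ n := Filter.eventually_ge_atTop _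
  have hbound : ∀ᶠ n : ℕ in Filter.atTop,
      ‖(dynExp lam ((n : ℝ) ^ α) n ![t₁, t₂]
            (fun ω => cliqueCountR n k (ω 0) * cliqueCountR n k (ω 1)) -
          dynExp lam ((n : ℝ) ^ α) n ![t₁, t₂] (fun ω => cliqueCountR n k (ω 0)) *
            dynExp lam ((n : ℝ) ^ α) n ![t₁, t₂] (fun ω => cliqueCountR n k (ω 1))) /
          staticVar n ((n : ℝ) ^ α) (cliqueCountR n k) - θ‖ ≤ g n := by
    filter_upwards [hev1, hev2] with n hp2 hn24
    set p : ℝ := (n : ℝ) ^ α with hpdef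
    have hn0 : 0 < n := by omega
    have hN0 : (0 : ℝ) < (n : ℝ) := by exact_mod_cast hn0
    have hp0 : 0 < p := Real.rpow_pos_of_pos hN0 α
    have hp1 : p < 1 := by
      have : p ≤ 1 / 2 := hp2
      linarith
    set C : ℕ := (k + 1).choose 2 with hC
    set Mn : ℕ := (n / 3).choose 2 * ((n / 3).choose (k - 1) * (n / 3).choose (k - 1)) with hMn
    set Scov : ℝ := ∑ A ∈ Finset.powersetCard (k + 1) (Finset.univ : Finset (Fin n)),
        ∑ B ∈ Finset.powersetCard (k + 1) (Finset.univ : Finset (Fin n)),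
          p ^ (ES A).card * p ^ (ES B).card *
            (((p + (1 - p) * θ) / p) ^ (ES A ∩ ES B).card - 1) with hScov
    set Svar : ℝ := ∑ A ∈ Finset.powersetCard (k + 1) (Finset.univ : Finset (Fin n)),
        ∑ B ∈ Finset.powersetCard (k + 1) (Finset.univ : Finset (Fin n)),
          p ^ (ES A).card * p ^ (ES B).card * ((1 / p) ^ (ES A ∩ ES B).card - 1) with hSvar
    have hCov : dynExp lam p n ![t₁, t₂]
          (fun ω => cliqueCountR n k (ω 0) * cliqueCountR n k (ω 1)) -
        dynExp lam p n ![t₁, t₂] (fun ω => cliqueCountR n k (ω 0)) *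
          dynExp lam p n ![t₁, t₂] (fun ω => cliqueCountR n k (ω 1)) = Scov := by
      rw [hScov, hθdef]
      exact Cov_formula lam p t₁ t₂ (ne_of_gt hp0)
    have hVar : staticVar n p (cliqueCountR n k) = Svar := Var_formula p (ne_of_gt hp0)
    have hc2pos : (0 : ℝ) < p ^ C * p ^ C * (1 / p - 1) := by
      have h1 : 1 < 1 / p := by
        rw [lt_div_iff₀ hp0]; linarith
      have h2 : (0:ℝ) < p ^ C * p ^ C := by positivity
      nlinarith
    have hM1 : (1 : ℝ) ≤ (Mn : ℝ) := by
      have hm1 : 0 < (n / 3).choose 2 := Nat.choose_pos (by omega)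
      have hm2 : 0 < (n / 3).choose (k - 1) := Nat.choose_pos (by omega)
      have : 0 < Mn := by positivity
      exact_mod_cast this
    have hVL : (Mn : ℝ) * (p ^ C * p ^ C * (1 / p - 1)) ≤ Svar := by
      rw [hSvar]
      exact Var_lower p hp0 hp1 hk (by omega)
    have hMc2pos : (0 : ℝ) < (Mn : ℝ) * (p ^ C * p ^ C * (1 / p - 1)) := by
      have : (0:ℝ) < (Mn : ℝ) := lt_of_lt_of_le one_pos hM1
      exact mul_pos (by linarith) hc2pos
    have hVarpos : 0 < Svar := lt_of_lt_of_le hMc2pos hVL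
    have hNB := Num_bound (n := n) (k := k) p θ hp0 hp1 hθ0.le hθ1
    set BND : ℝ := ∑ j ∈ Finset.range (k + 2),
          (if 3 ≤ j then
            (2 ^ (k + 1) * n ^ (k + 1 - j) : ℝ) *
              (p ^ (k + 1).choose 2 * p ^ (k + 1).choose 2 * (1 / p) ^ j.choose 2)
          else 0) with hBNDdef
    have hBNDnonneg : 0 ≤ BND := by
      rw [hBNDdef]
      apply Finset.sum_nonneg
      intro j _
      by_cases h3 : 3 ≤ j
      · rw [if_pos h3]; positivity
      · rw [if_neg h3]
    rw [hCov, hVar]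
    have heq : Scov / Svar - θ = (Scov - θ * Svar) / Svar := by
      rw [sub_div, mul_div_assoc, div_self (ne_of_gt hVarpos), mul_one]
    rw [Real.norm_eq_abs, heq, abs_div, abs_of_pos hVarpos]
    have hstep1 : |Scov - θ * Svar| / Svar ≤ ((n : ℝ) ^ (k + 1) * BND) / Svar := by
      exact div_le_div_of_nonneg_right hNB hVarpos.le
    have hstep2 : ((n : ℝ) ^ (k + 1) * BND) / Svar
        ≤ ((n : ℝ) ^ (k + 1) * BND) / ((Mn : ℝ) * (p ^ C * p ^ C * (1 / p - 1))) :=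
      div_le_div_of_nonneg_left (by positivity) hMc2pos hVL
    refine hstep1.trans (hstep2.trans ?_)
    have hsplit : ((n : ℝ) ^ (k + 1) * BND) / ((Mn : ℝ) * (p ^ C * p ^ C * (1 / p - 1)))
        = ∑ j ∈ Finset.range (k + 2),
            (if 3 ≤ j then
              ((n : ℝ) ^ (k + 1) * ((2 ^ (k + 1) * n ^ (k + 1 - j) : ℝ) *
                (p ^ (k + 1).choose 2 * p ^ (k + 1).choose 2 * (1 / p) ^ j.choose 2)))
                / ((Mn : ℝ) * (p ^ C * p ^ C * (1 / p - 1)))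
            else 0) := by
      rw [hBNDdef, Finset.mul_sum, Finset.sum_div]
      apply Finset.sum_congr rfl
      intro j _
      by_cases h3 : 3 ≤ j
      · rw [if_pos h3, if_pos h3]
      · rw [if_neg h3, if_neg h3, mul_zero, zero_div]
    rw [hsplit, hg]
    apply Finset.sum_le_sum
    intro j hj
    by_cases h3 : 3 ≤ j
    · rw [if_pos h3, if_pos h3]
      have hjk : j ≤ k + 1 := by
        have := Finset.mem_range.mp hj; omega
      have := keystep k hk α n j h3 hjk hn24 hp2 hp0
      rw [hK]
      exact this
    · rw [if_neg h3, if_neg h3]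
  have hzero : Filter.Tendsto
      (fun n : ℕ =>
        (dynExp lam ((n : ℝ) ^ α) n ![t₁, t₂]
            (fun ω => cliqueCountR n k (ω 0) * cliqueCountR n k (ω 1)) -
          dynExp lam ((n : ℝ) ^ α) n ![t₁, t₂] (fun ω => cliqueCountR n k (ω 0)) *
            dynExp lam ((n : ℝ) ^ α) n ![t₁, t₂] (fun ω => cliqueCountR n k (ω 1))) /
          staticVar n ((n : ℝ) ^ α) (cliqueCountR n k) - θ)
      Filter.atTop (nhds 0) := squeeze_zero_norm' hbound hgtend
  have := hzero.add_const θ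
  simpa using this

end
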